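/- Let G be a regular graph on n vertices. Then there is a linear ordering of the edges of G such that any n/12 consecutive edges in the ordering form a matching. -/

import Mathlib

open Finset

section Helpers

variable {V : Type*} [Fintype V] [DecidableEq V]

/-- two edges share no vertex -/
def disjE (e f : Sym2 V) : Prop := ∀ v, v ∈ e → v ∉ f

lemma disjE_symm {e f : Sym2 V} (h : disjE e f) : disjE f e := fun v hv hv' => h v hv' hv

lemma not_disjE_self {e : Sym2 V} (h : disjE e e) : False := h e.out.1 (Sym2.out_fst_mem e) (Sym2.out_fst_mem e)

/-- a finset of edges forming a matching -/
def IsMatchingF (M : Finset (Sym2 V)) : Prop := ∀ e ∈ M, ∀ f ∈ M, e ≠ f → disjE e f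

lemma matching_subset {M N : Finset (Sym2 V)} (h : N ⊆ M) (hM : IsMatchingF M) : IsMatchingF N :=
  fun e he f hf hef => hM e (h he) f (h hf) hef

lemma matching_insert {M : Finset (Sym2 V)} (hM : IsMatchingF M) {e : Sym2 V}
    (h : ∀ f ∈ M, disjE e f) : IsMatchingF (insert e M) := by
  intro a ha b hb hab
  rcases Finset.mem_insert.1 ha with ha' | ha'
  · subst ha'
    rcases Finset.mem_insert.1 hb with hb' | hb'
    · exact absurd hb'.symm hab
    · exact h b hb'
  · rcases Finset.mem_insert.1 hb with hb' | hb'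
    · subst hb'
      exact disjE_symm (h a ha')
    · exact hM a ha' b hb' hab

lemma matching_union {M N : Finset (Sym2 V)} (hM : IsMatchingF M) (hN : IsMatchingF N)
    (h : ∀ e ∈ M, ∀ f ∈ N, disjE e f) : IsMatchingF (M ∪ N) := by
  intro a ha b hb hab
  rcases Finset.mem_union.1 ha with ha | ha <;> rcases Finset.mem_union.1 hb with hb | hb
  · exact hM a ha b hb hab
  · exact h a ha b hb
  · exact disjE_symm (h b hb a ha)
  · exact hN a ha b hb hab

/-- the vertex support of a finset of edges -/
def VSf (M : Finset (Sym2 V)) : Finset V := M.biUnion (fun e => Finset.univ.filter (fun v => v ∈ e))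

lemma mem_VSf {M : Finset (Sym2 V)} {v : V} : v ∈ VSf M ↔ ∃ e ∈ M, v ∈ e := by
  simp [VSf]

lemma exists_other {e : Sym2 V} {x : V} (hx : x ∈ e) (hd : ¬ e.IsDiag) :
    ∃ y, y ≠ x ∧ e = s(x, y) := by
  induction e with
  | _ a b =>
    rcases Sym2.mem_iff.1 hx with rfl | rfl
    · exact ⟨b, fun h => hd (by simp [h]), rfl⟩
    · exact ⟨a, fun h => hd (by simp [h]), Sym2.eq_swap⟩

lemma edge_filter_card_le (e : Sym2 V) : (Finset.univ.filter (fun v => v ∈ e)).card ≤ 2 := by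
  induction e with
  | _ a b =>
    have : (Finset.univ.filter (fun v => v ∈ s(a,b))) ⊆ {a, b} := by
      intro v hv
      simp only [Finset.mem_filter, Sym2.mem_iff] at hv
      simp [hv.2]
    exact le_trans (Finset.card_le_card this) (le_trans (Finset.card_insert_le a {b}) (by simp))

lemma edge_filter_card_eq {e : Sym2 V} (hd : ¬ e.IsDiag) :
    (Finset.univ.filter (fun v => v ∈ e)).card = 2 := by
  induction e with
  | _ a b =>
    have hab : a ≠ b := by simpa using hd
    have : (Finset.univ.filter (fun v => v ∈ s(a,b))) = {a, b} := by
      ext v; simp [Sym2.mem_iff]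
    rw [this, Finset.card_insert_of_notMem (by simp [hab]), Finset.card_singleton]

lemma card_VSf {M : Finset (Sym2 V)} (hM : IsMatchingF M) (hd : ∀ e ∈ M, ¬ e.IsDiag) :
    (VSf M).card = 2 * M.card := by
  rw [VSf, Finset.card_biUnion]
  · rw [Finset.sum_congr rfl (fun e he => edge_filter_card_eq (hd e he))]
    simp [mul_comm]
  · intro e he f hf hef
    simp only [Finset.disjoint_left, Finset.mem_filter]
    intro v hv hv'
    exact hM e he f hf hef v hv.2 hv'.2

/-- the e ∈ A with x ∈ e is unique in a matching -/
lemma matching_unique {A : Finset (Sym2 V)} (hA : IsMatchingF A) {a e : Sym2 V} {x : V}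
    (ha : a ∈ A) (hxa : x ∈ a) (he : e ∈ A) (hxe : x ∈ e) : e = a := by
  by_contra h
  exact hA e he a ha h x hxe hxa

set_option maxHeartbeats 2000000 in
lemma PF : ∀ (n : ℕ) (B A : Finset (Sym2 V)), B.card < n →
    IsMatchingF A → IsMatchingF B →
    (∀ e ∈ A, ¬ e.IsDiag) → (∀ e ∈ B, ¬ e.IsDiag) →
    Disjoint A B → ∀ x : V, x ∈ VSf A → x ∉ VSf B →
    ∃ PA PB : Finset (Sym2 V), PA ⊆ A ∧ PB ⊆ B ∧
      IsMatchingF ((A \ PA) ∪ PB) ∧ IsMatchingF ((B \ PB) ∪ PA) ∧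
      (∀ e ∈ A, x ∈ e → e ∈ PA) ∧
      (PA.card = PB.card + 1 ∨
        (PA.card = PB.card ∧
          ∀ e ∈ (A \ PA) ∪ (B \ PB), ∀ f ∈ PA ∪ PB, disjE e f)) := by
  intro n
  induction n with
  | zero => intro B A h; omega
  | succ n ih =>
    intro B A hcard hA hB hAd hBd hAB x hxA hxB
    obtain ⟨a₀, ha₀A, hxa₀⟩ := mem_VSf.1 hxA
    obtain ⟨y, hyx, hay⟩ := exists_other hxa₀ (hAd a₀ ha₀A)
    have va₀ : ∀ v, v ∈ a₀ ↔ v = x ∨ v = y := fun v => by rw [hay]; exact Sym2.mem_iff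
    have hya₀ : y ∈ a₀ := (va₀ y).2 (Or.inr rfl)
    have hxB' : ∀ e ∈ B, x ∉ e := fun e he hx => hxB (mem_VSf.2 ⟨e, he, hx⟩)
    have hxuA : ∀ e ∈ A, x ∈ e → e = a₀ := fun e he hx => matching_unique hA ha₀A hxa₀ he hx
    have hyuA : ∀ e ∈ A, y ∈ e → e = a₀ := fun e he hy => matching_unique hA ha₀A hya₀ he hy
    by_cases hyB : y ∈ VSf B
    · -- case 2 : continue along b₀
      obtain ⟨b₀, hb₀B, hyb₀⟩ := mem_VSf.1 hyB
      obtain ⟨z, hzy, hbz⟩ := exists_other hyb₀ (hBd b₀ hb₀B)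
      have vb₀ : ∀ v, v ∈ b₀ ↔ v = y ∨ v = z := fun v => by rw [hbz]; exact Sym2.mem_iff
      have hzb₀ : z ∈ b₀ := (vb₀ z).2 (Or.inr rfl)
      have hzx : z ≠ x := fun h => hxB' b₀ hb₀B (h ▸ hzb₀)
      have hyuB : ∀ e ∈ B, y ∈ e → e = b₀ := fun e he hy => matching_unique hB hb₀B hyb₀ he hy
      have hzuB : ∀ e ∈ B, z ∈ e → e = b₀ := fun e he hz => matching_unique hB hb₀B hzb₀ he hz
      have hza₀ : z ∉ a₀ := fun h => by rcases (va₀ z).1 h with h | h; exact hzx h; exact hzy h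
      by_cases hzA : z ∈ VSf A
      · -- case 2b : recurse
        obtain ⟨a₁, ha₁A, hza₁⟩ := mem_VSf.1 hzA
        have ha₁a₀ : a₁ ≠ a₀ := fun h => hza₀ (h ▸ hza₁)
        set A₁ := A.erase a₀ with hA₁
        set B₁ := B.erase b₀ with hB₁
        have hcard₁ : B₁.card < n := by
          have h1 : 1 ≤ B.card := Finset.card_pos.2 ⟨b₀, hb₀B⟩
          rw [hB₁, Finset.card_erase_of_mem hb₀B]; omega
        have hzA₁ : z ∈ VSf A₁ := mem_VSf.2 ⟨a₁, Finset.mem_erase.2 ⟨ha₁a₀, ha₁A⟩, hza₁⟩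
        have hzB₁ : z ∉ VSf B₁ := by
          intro h
          obtain ⟨e, he, hze⟩ := mem_VSf.1 h
          exact (Finset.mem_erase.1 he).1 (hzuB e (Finset.mem_erase.1 he).2 hze)
        obtain ⟨PA', PB', hPA's, hPB's, hM1, hM2, hcov, halt⟩ :=
          ih B₁ A₁ hcard₁ (matching_subset (Finset.erase_subset _ _) hA)
            (matching_subset (Finset.erase_subset _ _) hB)
            (fun e he => hAd e (Finset.erase_subset _ _ he))
            (fun e he => hBd e (Finset.erase_subset _ _ he))
            (Finset.disjoint_of_subset_left (Finset.erase_subset _ _)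
              (Finset.disjoint_of_subset_right (Finset.erase_subset _ _) hAB))
            z hzA₁ hzB₁
        have ha₀PA' : a₀ ∉ PA' := fun h => (Finset.mem_erase.1 (hPA's h)).1 rfl
        have hb₀PB' : b₀ ∉ PB' := fun h => (Finset.mem_erase.1 (hPB's h)).1 rfl
        refine ⟨insert a₀ PA', insert b₀ PB',
          Finset.insert_subset ha₀A (hPA's.trans (Finset.erase_subset _ _)),
          Finset.insert_subset hb₀B (hPB's.trans (Finset.erase_subset _ _)), ?_, ?_, ?_, ?_⟩
        · -- (A \ insert a₀ PA') ∪ insert b₀ PB' matching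
          have hEq : (A \ insert a₀ PA') ∪ insert b₀ PB' = insert b₀ ((A₁ \ PA') ∪ PB') := by
            ext e
            simp only [Finset.mem_union, Finset.mem_sdiff, Finset.mem_insert, hA₁,
              Finset.mem_erase]
            tauto
          rw [hEq]
          refine matching_insert hM1 ?_
          intro f hf v hv hvf
          rcases (vb₀ v).1 hv with rfl | rfl
          · rcases Finset.mem_union.1 hf with hf | hf
            · have := Finset.mem_sdiff.1 hf
              exact (Finset.mem_erase.1 this.1).1 (hyuA f (Finset.erase_subset _ _ this.1) hvf)
            · exact (Finset.mem_erase.1 (hPB's hf)).1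
                (hyuB f (Finset.erase_subset _ _ (hPB's hf)) hvf)
          · rcases Finset.mem_union.1 hf with hf | hf
            · have := Finset.mem_sdiff.1 hf
              exact this.2 (hcov f this.1 hvf)
            · exact (Finset.mem_erase.1 (hPB's hf)).1
                (hzuB f (Finset.erase_subset _ _ (hPB's hf)) hvf)
        · -- (B \ insert b₀ PB') ∪ insert a₀ PA' matching
          have hEq : (B \ insert b₀ PB') ∪ insert a₀ PA' = insert a₀ ((B₁ \ PB') ∪ PA') := by
            ext e
            simp only [Finset.mem_union, Finset.mem_sdiff, Finset.mem_insert, hB₁,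
              Finset.mem_erase]
            tauto
          rw [hEq]
          refine matching_insert hM2 ?_
          intro f hf v hv hvf
          rcases (va₀ v).1 hv with rfl | rfl
          · rcases Finset.mem_union.1 hf with hf | hf
            · exact hxB' f (Finset.erase_subset _ _ (Finset.mem_sdiff.1 hf).1) hvf
            · exact (Finset.mem_erase.1 (hPA's hf)).1
                (hxuA f (Finset.erase_subset _ _ (hPA's hf)) hvf)
          · rcases Finset.mem_union.1 hf with hf | hf
            · have := Finset.mem_sdiff.1 hf
              exact (Finset.mem_erase.1 this.1).1 (hyuB f (Finset.erase_subset _ _ this.1) hvf)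
            · exact (Finset.mem_erase.1 (hPA's hf)).1
                (hyuA f (Finset.erase_subset _ _ (hPA's hf)) hvf)
        · intro e he hxe
          exact Finset.mem_insert.2 (Or.inl (hxuA e he hxe))
        · have hcA : (insert a₀ PA').card = PA'.card + 1 := Finset.card_insert_of_notMem ha₀PA'
          have hcB : (insert b₀ PB').card = PB'.card + 1 := Finset.card_insert_of_notMem hb₀PB'
          rcases halt with h | ⟨hc, hclos⟩
          · exact Or.inl (by omega)
          · refine Or.inr ⟨by omega, ?_⟩
            have hEqA : A \ insert a₀ PA' = A₁ \ PA' := by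
              ext e
              simp only [Finset.mem_sdiff, Finset.mem_insert, hA₁, Finset.mem_erase]
              tauto
            have hEqB : B \ insert b₀ PB' = B₁ \ PB' := by
              ext e
              simp only [Finset.mem_sdiff, Finset.mem_insert, hB₁, Finset.mem_erase]
              tauto
            rw [hEqA, hEqB]
            intro e he f hf
            rcases Finset.mem_union.1 hf with hf | hf <;> rcases Finset.mem_insert.1 hf with rfl | hf
            · -- f = a₀
              intro v hv hva
              rcases (va₀ v).1 hva with rfl | rfl
              · rcases Finset.mem_union.1 he with he | he
                · exact (Finset.mem_erase.1 (Finset.mem_sdiff.1 he).1).1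
                    (hxuA e (Finset.erase_subset _ _ (Finset.mem_sdiff.1 he).1) hv)
                · exact hxB' e (Finset.erase_subset _ _ (Finset.mem_sdiff.1 he).1) hv
              · rcases Finset.mem_union.1 he with he | he
                · exact (Finset.mem_erase.1 (Finset.mem_sdiff.1 he).1).1
                    (hyuA e (Finset.erase_subset _ _ (Finset.mem_sdiff.1 he).1) hv)
                · exact (Finset.mem_erase.1 (Finset.mem_sdiff.1 he).1).1
                    (hyuB e (Finset.erase_subset _ _ (Finset.mem_sdiff.1 he).1) hv)
            · exact hclos e he f (Finset.mem_union.2 (Or.inl hf))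
            · -- f = b₀
              intro v hv hvb
              rcases (vb₀ v).1 hvb with rfl | rfl
              · rcases Finset.mem_union.1 he with he | he
                · exact (Finset.mem_erase.1 (Finset.mem_sdiff.1 he).1).1
                    (hyuA e (Finset.erase_subset _ _ (Finset.mem_sdiff.1 he).1) hv)
                · exact (Finset.mem_erase.1 (Finset.mem_sdiff.1 he).1).1
                    (hyuB e (Finset.erase_subset _ _ (Finset.mem_sdiff.1 he).1) hv)
              · rcases Finset.mem_union.1 he with he | he
                · exact (Finset.mem_sdiff.1 he).2 (hcov e (Finset.mem_sdiff.1 he).1 hv)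
                · exact (Finset.mem_erase.1 (Finset.mem_sdiff.1 he).1).1
                    (hzuB e (Finset.erase_subset _ _ (Finset.mem_sdiff.1 he).1) hv)
            · exact hclos e he f (Finset.mem_union.2 (Or.inr hf))
      · -- case 2a : component is {a₀, b₀}
        have hzA' : ∀ e ∈ A, z ∉ e := fun e he hz => hzA (mem_VSf.2 ⟨e, he, hz⟩)
        refine ⟨{a₀}, {b₀}, Finset.singleton_subset_iff.2 ha₀A,
          Finset.singleton_subset_iff.2 hb₀B, ?_, ?_, ?_, ?_⟩
        · refine matching_union (matching_subset Finset.sdiff_subset hA)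
            (fun e he f hf hef => absurd (by
              rw [Finset.mem_singleton.1 he, Finset.mem_singleton.1 hf]) hef) ?_
          intro e he f hf v hv hvf
          rw [Finset.mem_singleton.1 hf] at hvf
          have heA := Finset.mem_sdiff.1 he
          rcases (vb₀ v).1 hvf with rfl | rfl
          · exact heA.2 (Finset.mem_singleton.2 (hyuA e heA.1 hv))
          · exact hzA' e heA.1 hv
        · refine matching_union (matching_subset Finset.sdiff_subset hB)
            (fun e he f hf hef => absurd (by
              rw [Finset.mem_singleton.1 he, Finset.mem_singleton.1 hf]) hef) ?_
          intro e he f hf v hv hvf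
          rw [Finset.mem_singleton.1 hf] at hvf
          have heB := Finset.mem_sdiff.1 he
          rcases (va₀ v).1 hvf with rfl | rfl
          · exact hxB' e heB.1 hv
          · exact heB.2 (Finset.mem_singleton.2 (hyuB e heB.1 hv))
        · exact fun e he hxe => Finset.mem_singleton.2 (hxuA e he hxe)
        · refine Or.inr ⟨by simp, ?_⟩
          intro e he f hf v hv hvf
          have hf' : f = a₀ ∨ f = b₀ := by
            simpa using Finset.mem_union.1 hf
          rcases Finset.mem_union.1 he with he | he
          · have heA := Finset.mem_sdiff.1 he
            rcases hf' with rfl | rfl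
            · rcases (va₀ v).1 hvf with rfl | rfl
              · exact heA.2 (Finset.mem_singleton.2 (hxuA e heA.1 hv))
              · exact heA.2 (Finset.mem_singleton.2 (hyuA e heA.1 hv))
            · rcases (vb₀ v).1 hvf with rfl | rfl
              · exact heA.2 (Finset.mem_singleton.2 (hyuA e heA.1 hv))
              · exact hzA' e heA.1 hv
          · have heB := Finset.mem_sdiff.1 he
            rcases hf' with rfl | rfl
            · rcases (va₀ v).1 hvf with rfl | rfl
              · exact hxB' e heB.1 hv
              · exact heB.2 (Finset.mem_singleton.2 (hyuB e heB.1 hv))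
            · rcases (vb₀ v).1 hvf with rfl | rfl
              · exact heB.2 (Finset.mem_singleton.2 (hyuB e heB.1 hv))
              · exact heB.2 (Finset.mem_singleton.2 (hzuB e heB.1 hv))
    · -- case 1 : a₀ can move
      have hyB' : ∀ e ∈ B, y ∉ e := fun e he hy => hyB (mem_VSf.2 ⟨e, he, hy⟩)
      refine ⟨{a₀}, ∅, Finset.singleton_subset_iff.2 ha₀A, Finset.empty_subset _,
        ?_, ?_, ?_, Or.inl (by simp)⟩
      · rw [Finset.union_empty]
        exact matching_subset Finset.sdiff_subset hA
      · rw [Finset.sdiff_empty]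
        refine matching_union hB
          (fun e he f hf hef => absurd (by
            rw [Finset.mem_singleton.1 he, Finset.mem_singleton.1 hf]) hef) ?_
        intro e he f hf v hv hvf
        rw [Finset.mem_singleton.1 hf] at hvf
        rcases (va₀ v).1 hvf with rfl | rfl
        · exact hxB' e he hv
        · exact hyB' e he hv
      · exact fun e he hxe => Finset.mem_singleton.2 (hxuA e he hxe)


lemma MOVE : ∀ (N : ℕ) (A B : Finset (Sym2 V)), (A ∪ B).card ≤ N →
    IsMatchingF A → IsMatchingF B →
    (∀ e ∈ A, ¬ e.IsDiag) → (∀ e ∈ B, ¬ e.IsDiag) → Disjoint A B →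
    B.card < A.card →
    ∃ A' B' : Finset (Sym2 V), A' ∪ B' = A ∪ B ∧ Disjoint A' B' ∧
      IsMatchingF A' ∧ IsMatchingF B' ∧ A'.card + 1 = A.card ∧ B'.card = B.card + 1 := by
  intro N
  induction N with
  | zero =>
    intro A B hN _ _ _ _ _ hlt
    have : A ⊆ A ∪ B := Finset.subset_union_left
    have := Finset.card_le_card this
    omega
  | succ N ih =>
    intro A B hN hA hB hAd hBd hAB hlt
    -- find a vertex covered by A but not B
    have hcards : (VSf B).card < (VSf A).card := by
      rw [card_VSf hA hAd, card_VSf hB hBd]; omega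
    have hx : ∃ x, x ∈ VSf A ∧ x ∉ VSf B := by
      by_contra h
      push_neg at h
      exact absurd (Finset.card_le_card fun v hv => h v hv) (by omega)
    obtain ⟨x, hxA, hxB⟩ := hx
    obtain ⟨PA, PB, hPAs, hPBs, hM1, hM2, hcov, halt⟩ :=
      PF (B.card + 1) B A (by omega) hA hB hAd hBd hAB x hxA hxB
    have hPAcard := Finset.card_le_card hPAs
    have hPBcard := Finset.card_le_card hPBs
    have hdisjAP : Disjoint (A \ PA) PB :=
      Finset.disjoint_of_subset_left Finset.sdiff_subset
        (Finset.disjoint_of_subset_right hPBs hAB)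
    have hdisjBP : Disjoint (B \ PB) PA :=
      Finset.disjoint_of_subset_left Finset.sdiff_subset
        (Finset.disjoint_of_subset_right hPAs hAB.symm)
    have hunion : ((A \ PA) ∪ PB) ∪ ((B \ PB) ∪ PA) = A ∪ B := by
      ext e
      simp only [Finset.mem_union, Finset.mem_sdiff]
      constructor
      · rintro ((⟨h, _⟩ | h) | (⟨h, _⟩ | h))
        · exact Or.inl h
        · exact Or.inr (hPBs h)
        · exact Or.inr h
        · exact Or.inl (hPAs h)
      · rintro (h | h)
        · by_cases hp : e ∈ PA
          · exact Or.inr (Or.inr hp)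
          · exact Or.inl (Or.inl ⟨h, hp⟩)
        · by_cases hp : e ∈ PB
          · exact Or.inl (Or.inr hp)
          · exact Or.inr (Or.inl ⟨h, hp⟩)
    have hdis : Disjoint ((A \ PA) ∪ PB) ((B \ PB) ∪ PA) := by
      rw [Finset.disjoint_left]
      intro e he he'
      rcases Finset.mem_union.1 he with he | he <;> rcases Finset.mem_union.1 he' with he' | he'
      · exact Finset.disjoint_left.1 hAB (Finset.mem_sdiff.1 he).1
          (Finset.sdiff_subset he')
      · exact (Finset.mem_sdiff.1 he).2 he'
      · exact (Finset.mem_sdiff.1 he').2 he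
      · exact Finset.disjoint_left.1 hAB (hPAs he') (hPBs he)
    rcases halt with hwin | ⟨hbal, hclos⟩
    · -- winning case : swap
      refine ⟨(A \ PA) ∪ PB, (B \ PB) ∪ PA, hunion, hdis, hM1, hM2, ?_, ?_⟩
      · rw [Finset.card_union_of_disjoint hdisjAP, Finset.card_sdiff_of_subset hPAs]
        omega
      · rw [Finset.card_union_of_disjoint hdisjBP, Finset.card_sdiff_of_subset hPBs]
        omega
    · -- balanced case : delete the component and recurse
      have hPAne : PA.Nonempty := by
        obtain ⟨a₀, ha₀, hxa₀⟩ := mem_VSf.1 hxA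
        exact ⟨a₀, hcov a₀ ha₀ hxa₀⟩
      obtain ⟨a₀, ha₀PA⟩ := hPAne
      have hcard' : ((A \ PA) ∪ (B \ PB)).card ≤ N := by
        have hsub : (A \ PA) ∪ (B \ PB) ⊆ (A ∪ B).erase a₀ := by
          intro e he
          rcases Finset.mem_union.1 he with he | he
          · have := Finset.mem_sdiff.1 he
            exact Finset.mem_erase.2 ⟨fun h => this.2 (h ▸ ha₀PA), Finset.mem_union.2 (Or.inl this.1)⟩
          · have := Finset.mem_sdiff.1 he
            refine Finset.mem_erase.2 ⟨fun h => ?_, Finset.mem_union.2 (Or.inr this.1)⟩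
            exact Finset.disjoint_left.1 hAB (hPAs ha₀PA) (h ▸ this.1)
        have := Finset.card_le_card hsub
        have hea : a₀ ∈ A ∪ B := Finset.mem_union.2 (Or.inl (hPAs ha₀PA))
        rw [Finset.card_erase_of_mem hea] at this
        have : 1 ≤ (A ∪ B).card := Finset.card_pos.2 ⟨a₀, hea⟩
        omega
      obtain ⟨A₁', B₁', hu₁, hd₁, hm₁, hm₂, hca₁, hcb₁⟩ :=
        ih (A \ PA) (B \ PB) hcard'
          (matching_subset Finset.sdiff_subset hA)
          (matching_subset Finset.sdiff_subset hB)
          (fun e he => hAd e (Finset.sdiff_subset he))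
          (fun e he => hBd e (Finset.sdiff_subset he))
          (Finset.disjoint_of_subset_left Finset.sdiff_subset
            (Finset.disjoint_of_subset_right Finset.sdiff_subset hAB))
          (by
            rw [Finset.card_sdiff_of_subset hPAs, Finset.card_sdiff_of_subset hPBs]
            omega)
      -- A₁' and B₁' are vertex-disjoint from PA ∪ PB
      have hsub₁ : A₁' ⊆ (A \ PA) ∪ (B \ PB) := hu₁ ▸ Finset.subset_union_left
      have hsub₂ : B₁' ⊆ (A \ PA) ∪ (B \ PB) := hu₁ ▸ Finset.subset_union_right
      have hvd : ∀ e ∈ (A \ PA) ∪ (B \ PB), ∀ f, (f ∈ PA ∨ f ∈ PB) → disjE e f := by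
        intro e he f hf
        exact hclos e he f (Finset.mem_union.2 hf)
      have hdisjedge : ∀ (X : Finset (Sym2 V)), X ⊆ (A \ PA) ∪ (B \ PB) →
          ∀ (P : Finset (Sym2 V)), (P = PA ∨ P = PB) → Disjoint X P := by
        intro X hX P hP
        rw [Finset.disjoint_left]
        intro e heX heP
        have : disjE e e := hvd e (hX heX) e (by rcases hP with rfl | rfl; exacts [Or.inl heP, Or.inr heP])
        exact not_disjE_self this
      refine ⟨A₁' ∪ PA, B₁' ∪ PB, ?_, ?_, ?_, ?_, ?_, ?_⟩
      · -- union
        have : (A₁' ∪ PA) ∪ (B₁' ∪ PB) = (A₁' ∪ B₁') ∪ (PA ∪ PB) := by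
          ext e; simp only [Finset.mem_union]; tauto
        rw [this, hu₁]
        ext e
        simp only [Finset.mem_union, Finset.mem_sdiff]
        constructor
        · rintro ((⟨h,_⟩|⟨h,_⟩)|(h|h))
          · exact Or.inl h
          · exact Or.inr h
          · exact Or.inl (hPAs h)
          · exact Or.inr (hPBs h)
        · rintro (h|h)
          · by_cases hp : e ∈ PA
            · exact Or.inr (Or.inl hp)
            · exact Or.inl (Or.inl ⟨h, hp⟩)
          · by_cases hp : e ∈ PB
            · exact Or.inr (Or.inr hp)
            · exact Or.inl (Or.inr ⟨h, hp⟩)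
      · -- disjoint
        rw [Finset.disjoint_left]
        intro e he he'
        rcases Finset.mem_union.1 he with he | he <;> rcases Finset.mem_union.1 he' with he' | he'
        · exact Finset.disjoint_left.1 hd₁ he he'
        · exact Finset.disjoint_left.1 (hdisjedge A₁' hsub₁ PB (Or.inr rfl)) he he'
        · exact Finset.disjoint_left.1 (hdisjedge B₁' hsub₂ PA (Or.inl rfl)) he' he
        · exact Finset.disjoint_left.1 hAB (hPAs he) (hPBs he')
      · exact matching_union hm₁ (matching_subset hPAs hA)
          (fun e he f hf => hvd e (hsub₁ he) f (Or.inl hf))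
      · exact matching_union hm₂ (matching_subset hPBs hB)
          (fun e he f hf => hvd e (hsub₂ he) f (Or.inr hf))
      · rw [Finset.card_union_of_disjoint (hdisjedge A₁' hsub₁ PA (Or.inl rfl))]
        rw [Finset.card_sdiff_of_subset hPAs] at hca₁
        omega
      · rw [Finset.card_union_of_disjoint (hdisjedge B₁' hsub₂ PB (Or.inr rfl))]
        rw [Finset.card_sdiff_of_subset hPBs] at hcb₁
        omega


lemma BALANCE (K : ℕ) (E0 : Finset (Sym2 V)) (hE0 : ∀ e ∈ E0, ¬ e.IsDiag) :
    ∀ (N : ℕ) (f : Fin K → Finset (Sym2 V)),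
    (∑ i, (f i).card ^ 2) ≤ N →
    (∀ i, IsMatchingF (f i)) → (∀ i, f i ⊆ E0) →
    (∀ i j, i ≠ j → Disjoint (f i) (f j)) →
    ∃ g : Fin K → Finset (Sym2 V),
      (∀ i, IsMatchingF (g i)) ∧ (∀ i, g i ⊆ E0) ∧
      (∀ i j, i ≠ j → Disjoint (g i) (g j)) ∧
      (∀ e, (∃ i, e ∈ g i) ↔ (∃ i, e ∈ f i)) ∧
      (∀ i j, (g i).card ≤ (g j).card + 1) := by
  intro N
  induction N with
  | zero =>
    intro f hsum hm hs hd
    refine ⟨f, hm, hs, hd, fun e => Iff.rfl, fun i j => ?_⟩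
    have h1 : (f i).card ^ 2 ≤ 0 := le_trans (Finset.single_le_sum (f := fun i => (f i).card ^ 2)
      (fun i _ => Nat.zero_le _) (Finset.mem_univ i)) hsum
    have : (f i).card = 0 := by nlinarith
    omega
  | succ N ih =>
    intro f hsum hm hs hd
    by_cases hbal : ∀ i j, (f i).card ≤ (f j).card + 1
    · exact ⟨f, hm, hs, hd, fun e => Iff.rfl, hbal⟩
    · push_neg at hbal
      obtain ⟨i, j, hij⟩ := hbal
      have hne : i ≠ j := fun h => by rw [h] at hij; omega
      obtain ⟨A', B', hu, hdis, hmA, hmB, hca, hcb⟩ :=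
        MOVE ((f i ∪ f j).card) (f i) (f j) le_rfl (hm i) (hm j)
          (fun e he => hE0 e (hs i he)) (fun e he => hE0 e (hs j he)) (hd i j hne)
          (by omega)
      set g0 : Fin K → Finset (Sym2 V) := Function.update (Function.update f i A') j B' with hg0
      have hg0i : g0 i = A' := by
        rw [hg0, Function.update_of_ne hne, Function.update_self]
      have hg0j : g0 j = B' := by
        rw [hg0, Function.update_self]
      have hg0other : ∀ t, t ≠ i → t ≠ j → g0 t = f t := by
        intro t hti htj
        rw [hg0, Function.update_of_ne htj, Function.update_of_ne hti]
      have hsubij : ∀ t, g0 t ⊆ f t ∨ g0 t ⊆ f i ∪ f j := by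
        intro t
        by_cases hti : t = i
        · subst hti; right; rw [hg0i, ← hu]; exact Finset.subset_union_left
        · by_cases htj : t = j
          · subst htj; right; rw [hg0j, ← hu]; exact Finset.subset_union_right
          · left; rw [hg0other t hti htj]
      have hg0s : ∀ t, g0 t ⊆ E0 := by
        intro t
        rcases hsubij t with h | h
        · exact h.trans (hs t)
        · exact h.trans (Finset.union_subset (hs i) (hs j))
      have hg0m : ∀ t, IsMatchingF (g0 t) := by
        intro t
        by_cases hti : t = i
        · subst hti; rw [hg0i]; exact hmA
        · by_cases htj : t = j
          · subst htj; rw [hg0j]; exact hmB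
          · rw [hg0other t hti htj]; exact hm t
      have hg0d : ∀ s t, s ≠ t → Disjoint (g0 s) (g0 t) := by
        have key : ∀ s t, s ≠ t → ∀ e, e ∈ g0 s → e ∈ g0 t → False := by
          intro s t hst e hes het
          have hmem : ∀ u, e ∈ g0 u → (e ∈ f u ∨ (u = i ∨ u = j)) := by
            intro u heu
            by_cases hui : u = i
            · exact Or.inr (Or.inl hui)
            · by_cases huj : u = j
              · exact Or.inr (Or.inr huj)
              · rw [hg0other u hui huj] at heu; exact Or.inl heu
          -- case analysis
          rcases hmem s hes with hfs | hsij <;> rcases hmem t het with hft | htij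
          · exact Finset.disjoint_left.1 (hd s t hst) hfs hft
          · -- t ∈ {i,j} : e ∈ g0 t ⊆ f i ∪ f j ; e ∈ f s with s ∉ {i,j}?  s could be i or j too
            have het' : e ∈ f i ∪ f j := by
              rcases htij with rfl | rfl
              · rw [hg0i] at het; rw [← hu]; exact Finset.mem_union_left _ het
              · rw [hg0j] at het; rw [← hu]; exact Finset.mem_union_right _ het
            rcases Finset.mem_union.1 het' with h | h
            · rcases eq_or_ne s i with rfl | hsi
              · -- s = i : e ∈ g0 i = A' and e ∈ f i... need t ≠ s and e in both A' and B'?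
                rw [hg0i] at hes
                rcases htij with rfl | rfl
                · exact hst rfl
                · rw [hg0j] at het
                  exact Finset.disjoint_left.1 hdis hes het
              · exact Finset.disjoint_left.1 (hd s i hsi) hfs h
            · rcases eq_or_ne s j with rfl | hsj
              · rw [hg0j] at hes
                rcases htij with rfl | rfl
                · rw [hg0i] at het
                  exact Finset.disjoint_left.1 hdis het hes
                · exact hst rfl
              · exact Finset.disjoint_left.1 (hd s j hsj) hfs h
          · -- s ∈ {i,j}, e ∈ f t
            have hes' : e ∈ f i ∪ f j := by
              rcases hsij with rfl | rfl
              · rw [hg0i] at hes; rw [← hu]; exact Finset.mem_union_left _ hes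
              · rw [hg0j] at hes; rw [← hu]; exact Finset.mem_union_right _ hes
            rcases Finset.mem_union.1 hes' with h | h
            · rcases eq_or_ne t i with rfl | hti
              · rw [hg0i] at het
                rcases hsij with rfl | rfl
                · exact hst rfl
                · rw [hg0j] at hes
                  exact Finset.disjoint_left.1 hdis het hes
              · exact Finset.disjoint_left.1 (hd t i hti) hft h
            · rcases eq_or_ne t j with rfl | htj
              · rw [hg0j] at het
                rcases hsij with rfl | rfl
                · rw [hg0i] at hes
                  exact Finset.disjoint_left.1 hdis hes het
                · exact hst rfl
              · exact Finset.disjoint_left.1 (hd t j htj) hft h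
          · -- both in {i,j} : since s ≠ t, {s,t} = {i,j}
            rcases hsij with rfl | rfl <;> rcases htij with rfl | rfl
            · exact hst rfl
            · rw [hg0i] at hes; rw [hg0j] at het
              exact Finset.disjoint_left.1 hdis hes het
            · rw [hg0j] at hes; rw [hg0i] at het
              exact Finset.disjoint_left.1 hdis het hes
            · exact hst rfl
        intro s t hst
        rw [Finset.disjoint_left]
        intro e hes het
        exact key s t hst e hes het
      have hg0mem : ∀ e, (∃ t, e ∈ g0 t) ↔ (∃ t, e ∈ f t) := by
        intro e
        constructor
        · rintro ⟨t, het⟩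
          by_cases hti : t = i
          · rw [hti, hg0i] at het
            have hmm : e ∈ f i ∪ f j := by rw [← hu]; exact Finset.mem_union_left _ het
            rcases Finset.mem_union.1 hmm with h | h
            exacts [⟨i, h⟩, ⟨j, h⟩]
          · by_cases htj : t = j
            · rw [htj, hg0j] at het
              have hmm : e ∈ f i ∪ f j := by rw [← hu]; exact Finset.mem_union_right _ het
              rcases Finset.mem_union.1 hmm with h | h
              exacts [⟨i, h⟩, ⟨j, h⟩]
            · exact ⟨t, by rwa [hg0other t hti htj] at het⟩
        · rintro ⟨t, het⟩
          by_cases hti : t = i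
          · rw [hti] at het
            have hmm : e ∈ A' ∪ B' := by rw [hu]; exact Finset.mem_union_left _ het
            rcases Finset.mem_union.1 hmm with h | h
            exacts [⟨i, by rwa [hg0i]⟩, ⟨j, by rwa [hg0j]⟩]
          · by_cases htj : t = j
            · rw [htj] at het
              have hmm : e ∈ A' ∪ B' := by rw [hu]; exact Finset.mem_union_right _ het
              rcases Finset.mem_union.1 hmm with h | h
              exacts [⟨i, by rwa [hg0i]⟩, ⟨j, by rwa [hg0j]⟩]
            · exact ⟨t, by rwa [hg0other t hti htj]⟩
      -- measure decreases
      have hsum' : (∑ t, (g0 t).card ^ 2) ≤ N := by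
        have e1 : (∑ t, (g0 t).card ^ 2)
            = B'.card ^ 2 + (A'.card ^ 2 + ∑ t ∈ (Finset.univ.erase j).erase i, (f t).card ^ 2) := by
          rw [← Finset.add_sum_erase _ (fun t => (g0 t).card ^ 2) (Finset.mem_univ j),
            ← Finset.add_sum_erase _ (fun t => (g0 t).card ^ 2)
              (Finset.mem_erase.2 ⟨hne, Finset.mem_univ i⟩), hg0i, hg0j]
          congr 2
          refine Finset.sum_congr rfl ?_
          intro t ht
          have h1 := Finset.mem_erase.1 ht
          have h2 := Finset.mem_erase.1 h1.2
          rw [hg0other t h1.1 h2.1]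
        have e2 : (∑ t, (f t).card ^ 2)
            = (f j).card ^ 2 + ((f i).card ^ 2 + ∑ t ∈ (Finset.univ.erase j).erase i, (f t).card ^ 2) := by
          rw [← Finset.add_sum_erase _ _ (Finset.mem_univ j),
            ← Finset.add_sum_erase _ _ (Finset.mem_erase.2 ⟨hne, Finset.mem_univ i⟩)]
        rw [e1]
        rw [e2] at hsum
        have hkey : B'.card ^ 2 + A'.card ^ 2 + 1 ≤ (f j).card ^ 2 + (f i).card ^ 2 := by
          nlinarith [hca, hcb, hij]
        omega
      obtain ⟨g, hgm, hgs, hgd, hgmem, hgbal⟩ := ih g0 hsum' hg0m hg0s hg0d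
      exact ⟨g, hgm, hgs, hgd, fun e => (hgmem e).trans (hg0mem e), hgbal⟩


instance (e f : Sym2 V) : Decidable (disjE e f) := by unfold disjE; infer_instance

lemma edge_two {G : SimpleGraph V} {e : Sym2 V} (he : e ∈ G.edgeSet) :
    ∃ x y, G.Adj x y ∧ e = s(x, y) := by
  induction e with
  | _ a b => exact ⟨a, b, he, rfl⟩

lemma GREEDY (G : SimpleGraph V) [DecidableRel G.Adj] (r : ℕ) (hreg : G.IsRegularOfDegree r)
    (hr : 1 ≤ r) :
    ∀ (n : ℕ) (E' : Finset (Sym2 V)), E'.card ≤ n → E' ⊆ G.edgeFinset →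
    ∃ c : Fin (2 * r) → Finset (Sym2 V), (∀ i, IsMatchingF (c i)) ∧ (∀ i, c i ⊆ E') ∧
      (∀ i j, i ≠ j → Disjoint (c i) (c j)) ∧ ∀ e ∈ E', ∃ i, e ∈ c i := by
  intro n
  induction n with
  | zero =>
    intro E' hcard _
    have : E' = ∅ := Finset.card_eq_zero.1 (by omega)
    subst this
    exact ⟨fun _ => ∅, fun _ e he => absurd he (Finset.notMem_empty e),
      fun _ => Finset.empty_subset _, fun _ _ _ => Finset.disjoint_empty_left _,
      fun e he => absurd he (Finset.notMem_empty e)⟩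
  | succ n ih =>
    intro E' hcard hE'
    rcases Finset.eq_empty_or_nonempty E' with rfl | ⟨e, heE'⟩
    · exact ⟨fun _ => ∅, fun _ e he => absurd he (Finset.notMem_empty e),
        fun _ => Finset.empty_subset _, fun _ _ _ => Finset.disjoint_empty_left _,
        fun e he => absurd he (Finset.notMem_empty e)⟩
    obtain ⟨c, hcm, hcs, hcd, hccov⟩ := ih (E'.erase e)
      (by rw [Finset.card_erase_of_mem heE']; omega) ((Finset.erase_subset _ _).trans hE')
    obtain ⟨ex, ey, hadj, hexy⟩ := edge_two (SimpleGraph.mem_edgeFinset.1 (hE' heE'))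
    -- the set of colors in conflict with e
    set used : Finset (Fin (2 * r)) :=
      Finset.univ.filter (fun i => ∃ f ∈ c i, ¬ disjE e f) with hused
    have husedcard : used.card ≤ 2 * r - 2 := by
      have hcle : used.card ≤ ((G.incidenceFinset ex).erase e ∪ (G.incidenceFinset ey).erase e).card := by
        refine Finset.card_le_card_of_injOn
          (fun i => if h : ∃ f ∈ c i, ¬ disjE e f then h.choose else e) ?_ ?_
        · intro i hi
          rw [Finset.mem_coe, hused, Finset.mem_filter] at hi
          rcases hi with ⟨-, h⟩
          simp only [dif_pos h]
          obtain ⟨hf, hnd⟩ := h.choose_spec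
          have hfE : h.choose ∈ E'.erase e := hcs i hf
          have hfe : h.choose ≠ e := (Finset.mem_erase.1 hfE).1
          have hfG : h.choose ∈ G.edgeSet := SimpleGraph.mem_edgeFinset.1 (hE' (Finset.mem_erase.1 hfE).2)
          have : ∃ v, v ∈ e ∧ v ∈ h.choose := by
            by_contra hc
            push_neg at hc
            exact hnd (fun v hv => hc v hv)
          obtain ⟨v, hv1, hv2⟩ := this
          rw [hexy, Sym2.mem_iff] at hv1
          rcases hv1 with rfl | rfl
          · refine Finset.mem_union_left _ (Finset.mem_erase.2 ⟨hfe, ?_⟩)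
            rw [SimpleGraph.mem_incidenceFinset]
            exact ⟨hfG, hv2⟩
          · refine Finset.mem_union_right _ (Finset.mem_erase.2 ⟨hfe, ?_⟩)
            rw [SimpleGraph.mem_incidenceFinset]
            exact ⟨hfG, hv2⟩
        · intro i hi j hj hij
          rw [Finset.mem_coe, hused, Finset.mem_filter] at hi hj
          by_contra hne
          simp only [dif_pos hi.2, dif_pos hj.2] at hij
          exact Finset.disjoint_left.1 (hcd i j hne) hi.2.choose_spec.1
            (hij ▸ hj.2.choose_spec.1)
      have h1 : ((G.incidenceFinset ex).erase e).card = r - 1 := by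
        rw [Finset.card_erase_of_mem, G.card_incidenceFinset_eq_degree, hreg ex]
        rw [SimpleGraph.mem_incidenceFinset]
        exact ⟨SimpleGraph.mem_edgeFinset.1 (hE' heE'), by rw [hexy]; simp⟩
      have h2 : ((G.incidenceFinset ey).erase e).card = r - 1 := by
        rw [Finset.card_erase_of_mem, G.card_incidenceFinset_eq_degree, hreg ey]
        rw [SimpleGraph.mem_incidenceFinset]
        exact ⟨SimpleGraph.mem_edgeFinset.1 (hE' heE'), by rw [hexy]; simp⟩
      have := Finset.card_union_le ((G.incidenceFinset ex).erase e) ((G.incidenceFinset ey).erase e)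
      omega
    have hfree : ∃ i₀ : Fin (2 * r), i₀ ∉ used := by
      by_contra h
      push_neg at h
      have : Finset.univ ⊆ used := fun i _ => h i
      have := Finset.card_le_card this
      rw [Finset.card_univ, Fintype.card_fin] at this
      omega
    obtain ⟨i₀, hi₀⟩ := hfree
    have hi₀' : ∀ f ∈ c i₀, disjE e f := by
      intro f hf
      by_contra h
      exact hi₀ (by rw [hused, Finset.mem_filter]; exact ⟨Finset.mem_univ _, f, hf, h⟩)
    refine ⟨Function.update c i₀ (insert e (c i₀)), ?_, ?_, ?_, ?_⟩
    · intro i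
      by_cases h : i = i₀
      · rw [h, Function.update_self]
        exact matching_insert (hcm i₀) hi₀'
      · rw [Function.update_of_ne h]; exact hcm i
    · intro i
      by_cases h : i = i₀
      · rw [h, Function.update_self]
        exact Finset.insert_subset heE' ((hcs i₀).trans (Finset.erase_subset _ _))
      · rw [Function.update_of_ne h]
        exact (hcs i).trans (Finset.erase_subset _ _)
    · intro i j hij
      have hnotin : ∀ t, e ∉ c t := fun t ht => (Finset.mem_erase.1 (hcs t ht)).1 rfl
      by_cases hi : i = i₀
      · subst hi
        rw [Function.update_self, Function.update_of_ne (fun h => hij h.symm)]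
        rw [Finset.disjoint_insert_left]
        exact ⟨hnotin j, hcd _ _ hij⟩
      · rw [Function.update_of_ne hi]
        by_cases hj : j = i₀
        · subst hj
          rw [Function.update_self, Finset.disjoint_insert_right]
          exact ⟨hnotin i, hcd _ _ hij⟩
        · rw [Function.update_of_ne hj]
          exact hcd _ _ hij
    · intro f hf
      by_cases hfe : f = e
      · exact ⟨i₀, by rw [Function.update_self]; exact Finset.mem_insert.2 (Or.inl hfe)⟩
      · obtain ⟨i, hi⟩ := hccov f (Finset.mem_erase.2 ⟨hfe, hf⟩)
        by_cases h : i = i₀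
        · subst h
          exact ⟨i, by rw [Function.update_self]; exact Finset.mem_insert.2 (Or.inr hi)⟩
        · exact ⟨i, by rwa [Function.update_of_ne h]⟩


/-- every window of `k` consecutive entries is pairwise vertex-disjoint -/
def Pk (k : ℕ) (l : List (Sym2 V)) : Prop :=
  ∀ i j : Fin l.length, (i : ℕ) < j → (j : ℕ) < i + k → disjE (l.get i) (l.get j)

lemma Pk_append {k : ℕ} {xs ys : List (Sym2 V)} (hx : Pk k xs) (hy : Pk k ys)
    (hc : ∀ a ∈ xs.drop (xs.length - (k - 1)), ∀ b ∈ ys.take (k - 1), disjE a b) :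
    Pk k (xs ++ ys) := by
  intro i j hij hjk
  have hlen : (xs ++ ys).length = xs.length + ys.length := by simp
  have hi : (i : ℕ) < xs.length + ys.length := by simpa using i.isLt
  have hj : (j : ℕ) < xs.length + ys.length := by simpa using j.isLt
  rw [List.get_eq_getElem, List.get_eq_getElem]
  rcases lt_or_ge (j : ℕ) xs.length with h2 | h2
  · have h1 : (i : ℕ) < xs.length := lt_trans hij h2
    rw [List.getElem_append_left h1, List.getElem_append_left h2]
    have := hx ⟨i, h1⟩ ⟨j, h2⟩ hij hjk
    simpa using this
  · rcases lt_or_ge (i : ℕ) xs.length with h1 | h1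
    · rw [List.getElem_append_left h1, List.getElem_append_right h2]
      have hbj : (j : ℕ) - xs.length < ys.length := by omega
      refine hc _ ?_ _ ?_
      · have hb : (i : ℕ) - (xs.length - (k-1)) < (xs.drop (xs.length - (k-1))).length := by
          rw [List.length_drop]; omega
        refine List.mem_iff_getElem.2 ⟨(i : ℕ) - (xs.length - (k-1)), hb, ?_⟩
        rw [List.getElem_drop]
        congr 1
        omega
      · have hb : (j : ℕ) - xs.length < (ys.take (k-1)).length := by
          rw [List.length_take]; omega
        refine List.mem_iff_getElem.2 ⟨(j : ℕ) - xs.length, hb, ?_⟩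
        exact List.getElem_take ..
    · rw [List.getElem_append_right h1, List.getElem_append_right h2]
      have hbi : (i : ℕ) - xs.length < ys.length := by omega
      have hbj : (j : ℕ) - xs.length < ys.length := by omega
      have := hy ⟨(i:ℕ) - xs.length, hbi⟩ ⟨(j:ℕ) - xs.length, hbj⟩ (by simp; omega) (by simp; omega)
      simpa using this

lemma Pk_of_matching {k : ℕ} {C : Finset (Sym2 V)} (hC : IsMatchingF C) {l : List (Sym2 V)}
    (hnd : l.Nodup) (hmem : ∀ e ∈ l, e ∈ C) : Pk k l := by
  intro i j hij _
  have hne : l.get i ≠ l.get j := by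
    intro h
    have := (List.Nodup.get_inj_iff hnd).1 h
    rw [this] at hij
    omega
  exact hC _ (hmem _ (l.get_mem ..)) _ (hmem _ (l.get_mem ..)) hne

lemma ASSEMBLE {k : ℕ} :
    ∀ (CL : List (Finset (Sym2 V))),
      (∀ C ∈ CL, IsMatchingF C ∧ 3 * (k - 1) ≤ C.card) →
      CL.Pairwise (fun C D => Disjoint C D) →
      ∀ W : Finset V, W.card ≤ 2 * (k - 1) →
      ∃ l : List (Sym2 V), l.Nodup ∧ (∀ e, e ∈ l ↔ ∃ C ∈ CL, e ∈ C) ∧ Pk k l ∧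
        (∀ e ∈ l.take (k - 1), ∀ v, v ∈ e → v ∉ W) := by
  intro CL
  induction CL with
  | nil =>
    intro _ _ W _
    exact ⟨[], List.nodup_nil, by simp, fun i j _ _ => absurd i.isLt (by simp), by simp⟩
  | cons C CL ih =>
    intro hM hD W hW
    obtain ⟨hCm, hCc⟩ := hM C List.mem_cons_self
    -- the edges of C avoiding W
    set S : Finset (Sym2 V) := C.filter (fun e => ∀ v, v ∈ e → v ∉ W) with hS
    have hSC : S ⊆ C := Finset.filter_subset _ _
    have hCS : (C \ S).card ≤ W.card := by
      refine Finset.card_le_card_of_injOn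
        (fun e => if h : ∃ v, v ∈ e ∧ v ∈ W then h.choose else e.out.1) ?_ ?_
      · intro e he
        have heC := (Finset.mem_sdiff.1 he).1
        have heS := (Finset.mem_sdiff.1 he).2
        have hex : ∃ v, v ∈ e ∧ v ∈ W := by
          by_contra hc
          push_neg at hc
          exact heS (Finset.mem_filter.2 ⟨heC, fun v hv => hc v hv⟩)
        simp only [dif_pos hex]
        exact hex.choose_spec.2
      · intro e he f hf hef
        have heC := (Finset.mem_sdiff.1 he).1
        have hfC := (Finset.mem_sdiff.1 hf).1
        have hex : ∃ v, v ∈ e ∧ v ∈ W := by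
          by_contra hc
          push_neg at hc
          exact (Finset.mem_sdiff.1 he).2 (Finset.mem_filter.2 ⟨heC, fun v hv => hc v hv⟩)
        have hfx : ∃ v, v ∈ f ∧ v ∈ W := by
          by_contra hc
          push_neg at hc
          exact (Finset.mem_sdiff.1 hf).2 (Finset.mem_filter.2 ⟨hfC, fun v hv => hc v hv⟩)
        simp only [dif_pos hex, dif_pos hfx] at hef
        by_contra hne
        exact hCm e heC f hfC hne hex.choose hex.choose_spec.1 (hef ▸ hfx.choose_spec.1)
    have hCcard : C.card = S.card + (C \ S).card := by
      rw [Finset.card_sdiff_of_subset hSC]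
      have := Finset.card_le_card hSC
      omega
    have hScard : k - 1 ≤ S.card := by omega
    -- order C : S first, then the rest
    set lC : List (Sym2 V) := S.toList ++ (C \ S).toList with hlC
    have hlCnd : lC.Nodup := List.Nodup.append S.nodup_toList (C \ S).nodup_toList
      (fun e he hf => (Finset.mem_sdiff.1 (Finset.mem_toList.1 hf)).2 (Finset.mem_toList.1 he))
    have hlCmem : ∀ e, e ∈ lC ↔ e ∈ C := by
      intro e
      rw [hlC, List.mem_append, Finset.mem_toList, Finset.mem_toList, Finset.mem_sdiff]
      constructor
      · rintro (h | h)
        · exact hSC h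
        · exact h.1
      · intro h
        by_cases hs : e ∈ S
        · exact Or.inl hs
        · exact Or.inr ⟨h, hs⟩
    have hlClen : lC.length = C.card := by
      rw [hlC, List.length_append, Finset.length_toList, Finset.length_toList,
        Finset.card_sdiff_of_subset hSC]
      have := Finset.card_le_card hSC
      omega
    -- forbidden vertices for the next block
    set W' : Finset V := (lC.drop (lC.length - (k-1))).toFinset.biUnion
      (fun e => Finset.univ.filter (fun v => v ∈ e)) with hW'
    have hmemW' : ∀ v, v ∈ W' ↔ ∃ e ∈ lC.drop (lC.length - (k-1)), v ∈ e := by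
      intro v
      rw [hW', Finset.mem_biUnion]
      constructor
      · rintro ⟨e, he, hv⟩
        exact ⟨e, List.mem_toFinset.1 he, (Finset.mem_filter.1 hv).2⟩
      · rintro ⟨e, he, hv⟩
        exact ⟨e, List.mem_toFinset.2 he, Finset.mem_filter.2 ⟨Finset.mem_univ _, hv⟩⟩
    have hW'card : W'.card ≤ 2 * (k-1) := by
      refine le_trans (Finset.card_biUnion_le) (le_trans (Finset.sum_le_sum
        (fun e _ => edge_filter_card_le e)) ?_)
      rw [Finset.sum_const, smul_eq_mul]
      have h1 : (lC.drop (lC.length - (k-1))).toFinset.card ≤ (lC.drop (lC.length - (k-1))).length :=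
        (lC.drop (lC.length - (k-1))).toFinset_card_le
      have h2 : (lC.drop (lC.length - (k-1))).length = lC.length - (lC.length - (k-1)) :=
        List.length_drop
      have h3 : k - 1 ≤ lC.length := by omega
      omega
    obtain ⟨l', hnd', hmem', hPk', htake'⟩ :=
      ih (fun D hD' => hM D (List.mem_cons_of_mem _ hD')) (List.pairwise_cons.1 hD).2 W' hW'card
    have hCdisj : ∀ D ∈ CL, Disjoint C D := (List.pairwise_cons.1 hD).1
    refine ⟨lC ++ l', ?_, ?_, ?_, ?_⟩
    · refine List.Nodup.append hlCnd hnd' ?_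
      intro e helC hel'
      obtain ⟨D, hD', heD⟩ := (hmem' e).1 hel'
      exact Finset.disjoint_left.1 (hCdisj D hD') ((hlCmem e).1 helC) heD
    · intro e
      rw [List.mem_append, hlCmem e, hmem' e]
      simp only [List.mem_cons]
      constructor
      · rintro (h | ⟨D, hD', heD⟩)
        · exact ⟨C, Or.inl rfl, h⟩
        · exact ⟨D, Or.inr hD', heD⟩
      · rintro ⟨D, (rfl | hD'), heD⟩
        · exact Or.inl heD
        · exact Or.inr ⟨D, hD', heD⟩
    · refine Pk_append (Pk_of_matching hCm hlCnd (fun e he => (hlCmem e).1 he)) hPk' ?_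
      intro a ha b hb v hva hvb
      exact htake' b hb v hvb ((hmemW' v).2 ⟨a, ha, hva⟩)
    · intro e he v hv
      have hklen : k - 1 ≤ lC.length := by omega
      rw [List.take_append_of_le_length hklen] at he
      have hkS : k - 1 ≤ S.toList.length := by rw [Finset.length_toList]; omega
      rw [hlC, List.take_append_of_le_length hkS] at he
      have heS : e ∈ S := Finset.mem_toList.1 (List.take_subset _ _ he)
      exact (Finset.mem_filter.1 heS).2 v hv


end Helpers

theorem stmt_3 {V : Type*} [Fintype V] [DecidableEq V] (G : SimpleGraph V)
    [DecidableRel G.Adj] (r : ℕ) (hreg : G.IsRegularOfDegree r) :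
    ∃ l : List (Sym2 V), l.Nodup ∧ (∀ e, e ∈ l ↔ e ∈ G.edgeSet) ∧
      ∀ i j : Fin l.length, (i : ℕ) < j → (j : ℕ) < i + Fintype.card V / 12 →
        ∀ v, v ∈ l.get i → v ∉ l.get j := by
  by_cases hk : Fintype.card V / 12 ≤ 1
  · -- trivial : windows have length ≤ 1
    refine ⟨G.edgeFinset.toList, G.edgeFinset.nodup_toList, ?_, ?_⟩
    · intro e
      rw [Finset.mem_toList, SimpleGraph.mem_edgeFinset]
    · intro i j hij hjk
      omega
  by_cases hr : r = 0
  · -- no edges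
    subst hr
    have hempty : ∀ e, e ∉ G.edgeSet := by
      intro e he
      obtain ⟨x, y, hadj, -⟩ := edge_two he
      have : y ∈ G.neighborFinset x := (SimpleGraph.mem_neighborFinset _ _ _).2 hadj
      have h0 := hreg x
      rw [← SimpleGraph.card_neighborFinset_eq_degree] at h0
      rw [Finset.card_eq_zero.1 h0] at this
      exact absurd this (Finset.notMem_empty y)
    refine ⟨[], List.nodup_nil, by simpa using hempty, ?_⟩
    intro i
    exact absurd i.isLt (by simp)
  -- main case
  push_neg at hk
  have hk2 : 2 ≤ Fintype.card V / 12 := hk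
  have hr1 : 1 ≤ r := Nat.one_le_iff_ne_zero.2 hr
  set n := Fintype.card V with hn
  set k := n / 12 with hkdef
  set m := G.edgeFinset.card with hm
  have hnd : ∀ e ∈ G.edgeFinset, ¬ e.IsDiag := by
    intro e he
    exact G.not_isDiag_of_mem_edgeSet (SimpleGraph.mem_edgeFinset.1 he)
  have hhandshake : n * r = 2 * m := by
    have h1 : ∑ v : V, G.degree v = n * r := by
      rw [Finset.sum_congr rfl (fun v _ => hreg v), Finset.sum_const, smul_eq_mul,
        Finset.card_univ]
    rw [hm, ← SimpleGraph.sum_degrees_eq_twice_card_edges, h1]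
  obtain ⟨c, hcm, hcs, hcd, hccov⟩ :=
    GREEDY G r hreg hr1 G.edgeFinset.card G.edgeFinset le_rfl Finset.Subset.rfl
  obtain ⟨g, hgm, hgs, hgd, hgcov, hgbal⟩ :=
    BALANCE (2 * r) G.edgeFinset hnd (∑ i, (c i).card ^ 2) c le_rfl hcm hcs hcd
  have hgcov' : ∀ e, (∃ i, e ∈ g i) ↔ e ∈ G.edgeFinset := by
    intro e
    rw [hgcov e]
    exact ⟨fun ⟨i, hi⟩ => hcs i hi, fun he => hccov e he⟩
  -- sum of class sizes is m
  have hbiUnion : Finset.univ.biUnion g = G.edgeFinset := by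
    ext e
    rw [Finset.mem_biUnion]
    constructor
    · rintro ⟨i, -, hi⟩
      exact (hgcov' e).1 ⟨i, hi⟩
    · intro he
      obtain ⟨i, hi⟩ := (hgcov' e).2 he
      exact ⟨i, Finset.mem_univ _, hi⟩
  have hsumcard : ∑ i, (g i).card = m := by
    rw [hm, ← hbiUnion, Finset.card_biUnion (fun i _ j _ hij => hgd i j hij)]
  have h12 : 12 * k ≤ n := by
    rw [hkdef, mul_comm]
    exact Nat.div_mul_le_self n 12
  -- every class is large
  have hlarge : ∀ i, 3 * (k - 1) ≤ (g i).card := by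
    intro i
    have hle : ∀ j, (g j).card ≤ (g i).card + 1 := fun j => hgbal j i
    have hsum_le : m ≤ (2 * r) * ((g i).card + 1) := by
      rw [← hsumcard]
      calc ∑ j, (g j).card ≤ ∑ _j : Fin (2*r), ((g i).card + 1) :=
            Finset.sum_le_sum (fun j _ => hle j)
        _ = (2 * r) * ((g i).card + 1) := by
            rw [Finset.sum_const, Finset.card_univ, Fintype.card_fin, smul_eq_mul]
    have hmul : (12 * k) * r ≤ n * r := Nat.mul_le_mul_right r h12
    -- 12 k r ≤ n r = 2 m ≤ 2 (2r) (X+1) = 4 r (X + 1)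
    have hfin : 12 * k * r ≤ 4 * r * ((g i).card + 1) := by
      calc 12 * k * r ≤ n * r := hmul
        _ = 2 * m := hhandshake
        _ ≤ 2 * ((2 * r) * ((g i).card + 1)) := by omega
        _ = 4 * r * ((g i).card + 1) := by ring
    have hcancel : 12 * k ≤ 4 * ((g i).card + 1) := by
      have h1 : r * (12 * k) ≤ r * (4 * ((g i).card + 1)) := by
        calc r * (12 * k) = 12 * k * r := by ring
          _ ≤ 4 * r * ((g i).card + 1) := hfin
          _ = r * (4 * ((g i).card + 1)) := by ring
      exact Nat.le_of_mul_le_mul_left h1 (by omega)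
    omega
  -- assemble
  set CL : List (Finset (Sym2 V)) := (List.finRange (2 * r)).map g with hCL
  have hCL1 : ∀ C ∈ CL, IsMatchingF C ∧ 3 * (k - 1) ≤ C.card := by
    intro C hC
    rw [hCL, List.mem_map] at hC
    obtain ⟨i, -, rfl⟩ := hC
    exact ⟨hgm i, hlarge i⟩
  have hCL2 : CL.Pairwise (fun C D => Disjoint C D) := by
    rw [hCL, List.pairwise_map]
    exact (List.pairwise_lt_finRange (2*r)).imp (fun h => hgd _ _ (Fin.ne_of_lt h))
  obtain ⟨l, hlnd, hlmem, hlPk, -⟩ := ASSEMBLE (k := k) CL hCL1 hCL2 ∅ (by simp)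
  refine ⟨l, hlnd, ?_, hlPk⟩
  intro e
  rw [hlmem e, ← SimpleGraph.mem_edgeFinset, ← hgcov' e]
  simp only [hCL, List.mem_map, List.mem_finRange]
  constructor
  · rintro ⟨C, ⟨i, -, rfl⟩, hi⟩
    exact ⟨i, hi⟩
  · rintro ⟨i, hi⟩
    exact ⟨g i, ⟨i, trivial, rfl⟩, hi⟩
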